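/- Fix a ∈ (0,1). Every eigenvalue λ of the problem −y'' = λy, y(0) = y(a) = y(1), is algebraically simple (i.e., dim_ℂ E(λ) = 1) if and only if a is irrational. -/

import Mathlib

open Set

noncomputable section

/-- `lam` is an eigenvalue of the problem `-y'' = lam y`, `y(0) = y(a) = y(1)`. -/
def IsEigA (a : ℝ) (lam : ℂ) : Prop :=
  ∃ y : ℝ → ℂ, ContDiffOn ℝ 2 y (Icc 0 1) ∧
    (∀ x ∈ Icc (0:ℝ) 1, -(iteratedDerivWithin 2 y (Icc (0:ℝ) 1) x) = lam * y x) ∧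
    (∃ x ∈ Icc (0:ℝ) 1, y x ≠ 0) ∧ y 0 = y a ∧ y a = y 1

/-- `u 0, …, u (n-1)` is a Jordan chain of length `n` at `lam` for the problem
`-y'' = lam y`, `y(0) = y(a) = y(1)`. -/
def IsJChainA (a : ℝ) (lam : ℂ) (n : ℕ) (u : ℕ → ℝ → ℂ) : Prop :=
  0 < n ∧
    (∀ k < n, ContDiffOn ℝ 2 (u k) (Icc 0 1) ∧ u k 0 = u k a ∧ u k a = u k 1) ∧
    (∀ x ∈ Icc (0:ℝ) 1,
      -(iteratedDerivWithin 2 (u 0) (Icc (0:ℝ) 1) x) = lam * u 0 x) ∧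
    (∀ k, 0 < k → k < n → ∀ x ∈ Icc (0:ℝ) 1,
      -(iteratedDerivWithin 2 (u k) (Icc (0:ℝ) 1) x) - lam * u k x = u (k - 1) x)

/-- The generalized eigenspace at `lam`, viewed as a set of functions on `[0,1]`:
`0` together with the (restrictions to `[0,1]` of the) last entries of Jordan chains. -/
def genEigA (a : ℝ) (lam : ℂ) : Set ((Icc (0:ℝ) 1) → ℂ) :=
  {z | z = 0 ∨ ∃ n : ℕ, ∃ u : ℕ → ℝ → ℂ,
    IsJChainA a lam n u ∧ (Icc (0:ℝ) 1).restrict (u (n - 1)) = z}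

namespace Stmt13Aux

lemma udo01 : UniqueDiffOn ℝ (Icc (0:ℝ) 1) := uniqueDiffOn_Icc one_pos

lemma ode_uniq (lam : ℂ) (r f f' g g' : ℝ → ℂ)
    (hf : ∀ x ∈ Icc (0:ℝ) 1, HasDerivWithinAt f (f' x) (Icc (0:ℝ) 1) x)
    (hf' : ∀ x ∈ Icc (0:ℝ) 1, HasDerivWithinAt f' (-lam * f x - r x) (Icc (0:ℝ) 1) x)
    (hg : ∀ x ∈ Icc (0:ℝ) 1, HasDerivWithinAt g (g' x) (Icc (0:ℝ) 1) x)
    (hg' : ∀ x ∈ Icc (0:ℝ) 1, HasDerivWithinAt g' (-lam * g x - r x) (Icc (0:ℝ) 1) x)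
    (h0 : f 0 = g 0) (h0' : f' 0 = g' 0) :
    EqOn f g (Icc (0:ℝ) 1) := by
  set v : ℝ → ℂ × ℂ → ℂ × ℂ := fun t p => (p.2, -lam * p.1 - r t) with hv
  have hK : ∀ t, LipschitzOnWith (1 ⊔ (‖-lam‖₊ * 1)) (v t) univ := by
    intro t
    apply LipschitzWith.lipschitzOnWith
    have h1 : LipschitzWith 1 (fun p : ℂ × ℂ => p.2) := LipschitzWith.prod_snd
    have h2 : LipschitzWith (‖-lam‖₊ * 1) (fun p : ℂ × ℂ => -lam * p.1 - r t) := by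
      have h3 : LipschitzWith (‖-lam‖₊ * 1) (fun p : ℂ × ℂ => -lam * p.1) :=
        (lipschitzWith_smul (α := ℂ) (β := ℂ) (-lam)).comp LipschitzWith.prod_fst
      intro p q
      simpa [edist_sub_right] using h3 p q
    exact h1.prodMk h2
  have key : ∀ (u u' : ℝ → ℂ), (∀ x ∈ Icc (0:ℝ) 1, HasDerivWithinAt u (u' x) (Icc (0:ℝ) 1) x) →
      (∀ x ∈ Icc (0:ℝ) 1, HasDerivWithinAt u' (-lam * u x - r x) (Icc (0:ℝ) 1) x) →
      (ContinuousOn (fun t => (u t, u' t)) (Icc (0:ℝ) 1) ∧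
       ∀ t ∈ Ico (0:ℝ) 1, HasDerivWithinAt (fun t => (u t, u' t)) (v t (u t, u' t)) (Ici t) t) := by
    intro u u' hu hu'
    constructor
    · exact ContinuousOn.prodMk (fun x hx => (hu x hx).continuousWithinAt)
        (fun x hx => (hu' x hx).continuousWithinAt)
    · intro t ht
      have htI : t ∈ Icc (0:ℝ) 1 := ⟨ht.1, ht.2.le⟩
      have hmem : Icc (0:ℝ) 1 ∈ nhdsWithin t (Ici t) := Icc_mem_nhdsGE_of_mem ht
      exact (((hu t htI).prodMk (hu' t htI)).mono_of_mem_nhdsWithin hmem)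
  obtain ⟨hfc, hfd⟩ := key f f' hf hf'
  obtain ⟨hgc, hgd⟩ := key g g' hg hg'
  have := ODE_solution_unique_of_mem_Icc_right (s := fun _ => univ) (fun t _ => hK t) hfc hfd
    (fun _ _ => trivial) hgc hgd (fun _ _ => trivial) (by simp [h0, h0'])
  intro x hx
  exact congrArg Prod.fst (this hx)

lemma hasDerivAt_cexp_mul (c : ℂ) (x : ℝ) :
    HasDerivAt (fun x : ℝ => Complex.exp (c * x)) (c * Complex.exp (c * x)) x := by
  have h1 : HasDerivAt (fun x : ℝ => c * (x:ℂ)) c x := by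
    simpa using ((hasDerivAt_id x).ofReal_comp.const_mul c)
  simpa [mul_comm] using h1.cexp

lemma hasDerivAt_ofReal' (x : ℝ) : HasDerivAt (fun x : ℝ => (x:ℂ)) 1 x :=
  (hasDerivAt_id x).ofReal_comp

lemma bridge {f : ℝ → ℂ} (hf : ContDiffOn ℝ 2 f (Icc 0 1)) :
    (∀ x ∈ Icc (0:ℝ) 1, HasDerivWithinAt f (derivWithin f (Icc (0:ℝ) 1) x) (Icc (0:ℝ) 1) x) ∧
    (∀ x ∈ Icc (0:ℝ) 1, HasDerivWithinAt (derivWithin f (Icc (0:ℝ) 1))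
        (iteratedDerivWithin 2 f (Icc (0:ℝ) 1) x) (Icc (0:ℝ) 1) x) := by
  constructor
  · intro x hx
    exact (hf.differentiableOn (by norm_num) x hx).hasDerivWithinAt
  · intro x hx
    have h1 : ContDiffOn ℝ 1 (derivWithin f (Icc (0:ℝ) 1)) (Icc (0:ℝ) 1) :=
      hf.derivWithin udo01 (by norm_num)
    have h2 := (h1.differentiableOn one_ne_zero x hx).hasDerivWithinAt
    have h3 : iteratedDerivWithin 2 f (Icc (0:ℝ) 1) x
        = derivWithin (derivWithin f (Icc (0:ℝ) 1)) (Icc (0:ℝ) 1) x := by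
      rw [iteratedDerivWithin_succ]
      apply derivWithin_congr
      · intro y hy; exact congrFun iteratedDerivWithin_one y
      · exact congrFun iteratedDerivWithin_one x
    rw [h3]
    exact h2

lemma sol_deriv (c γ δ α β : ℂ) (hc : c ≠ 0) :
    ∃ g g' : ℝ → ℂ,
      (∀ x : ℝ, g x = -((x:ℂ)/(2*c))*(γ*Complex.exp (c*x) - δ*Complex.exp (-c*x))
          + α*Complex.exp (c*x) + β*Complex.exp (-c*x)) ∧
      (∀ x, HasDerivAt g (g' x) x) ∧
      (∀ x, HasDerivAt g' (-(-(c^2)) * g x - (γ*Complex.exp (c*x) + δ*Complex.exp (-c*x))) x) ∧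
      g 0 = α + β ∧ g' 0 = -(1/(2*c))*(γ - δ) + c*α - c*β := by
  classical
  set e : ℝ → ℂ := fun x => Complex.exp (c*x) with he_def
  set f : ℝ → ℂ := fun x => Complex.exp (-c*x) with hf_def
  refine ⟨fun x => -((x:ℂ)/(2*c))*(γ*e x - δ*f x) + α*e x + β*f x,
    fun x => -(1/(2*c))*(γ*e x - δ*f x) - ((x:ℂ)/(2*c))*(c*γ*e x - (-c)*δ*f x)
      + c*α*e x + (-c)*β*f x, fun x => rfl, ?_, ?_, by simp [he_def, hf_def],
      by simp [he_def, hf_def]; ring⟩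
  · intro x
    have he := hasDerivAt_cexp_mul c x
    have hf := hasDerivAt_cexp_mul (-c) x
    have hx := hasDerivAt_ofReal' x
    have H := (((hx.mul ((he.const_mul γ).sub (hf.const_mul δ))).const_mul (-(1/(2*c)))).add
      ((he.const_mul α).add (hf.const_mul β)))
    have hfun : (fun x:ℝ => -((x:ℂ)/(2*c))*(γ*e x - δ*f x) + α*e x + β*f x)
        = (fun x:ℝ => -(1/(2*c)) * ((x:ℂ) * (γ * e x - δ * f x)) + (α * e x + β * f x)) := by
      funext t; simp only [he_def, hf_def]; ring
    rw [hfun]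
    refine H.congr_deriv ?_
    simp only [he_def, hf_def, Pi.sub_apply]; ring
  · intro x
    have he := hasDerivAt_cexp_mul c x
    have hf := hasDerivAt_cexp_mul (-c) x
    have hx := hasDerivAt_ofReal' x
    have H := ((((he.const_mul γ).sub (hf.const_mul δ)).const_mul (-(1/(2*c)))).sub
        ((hx.mul (((he.const_mul γ).const_mul c).sub
          (((hf.const_mul δ).const_mul (-c))))).const_mul ((1:ℂ)/(2*c)))).add
      (((he.const_mul α).const_mul c).add ((hf.const_mul β).const_mul (-c)))
    have hfun : (fun x:ℝ => -(1/(2*c))*(γ*e x - δ*f x) - ((x:ℂ)/(2*c))*(c*γ*e x - (-c)*δ*f x)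
          + c*α*e x + (-c)*β*f x)
        = (fun x:ℝ => (-(1/(2*c)) * (γ*e x - δ*f x)
            - (1/(2*c)) * ((x:ℂ) * (c*(γ*e x) - (-c)*(δ*f x))))
            + (c*(α*e x) + (-c)*(β*f x))) := by
      funext t; simp only [he_def, hf_def]; ring
    rw [hfun]
    refine H.congr_deriv ?_
    simp only [he_def, hf_def, Pi.sub_apply]
    field_simp
    ring

lemma rep_ne (lam c : ℂ) (hc2 : c^2 = -lam) (hc : c ≠ 0) (γ δ : ℂ) {w : ℝ → ℂ}
    (hw : ContDiffOn ℝ 2 w (Icc 0 1))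
    (hode : ∀ x ∈ Icc (0:ℝ) 1, -(iteratedDerivWithin 2 w (Icc (0:ℝ) 1) x) - lam * w x
            = γ*Complex.exp (c*x) + δ*Complex.exp (-c*x)) :
    ∃ α β : ℂ, ∀ x ∈ Icc (0:ℝ) 1,
      w x = -((x:ℂ)/(2*c))*(γ*Complex.exp (c*x) - δ*Complex.exp (-c*x))
          + α*Complex.exp (c*x) + β*Complex.exp (-c*x) := by
  classical
  set A := w 0 with hA
  set B := derivWithin w (Icc (0:ℝ) 1) 0 with hB
  set s := B + (γ-δ)/(2*c) with hs
  set α := (A + s/c)/2 with hα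
  set β := (A - s/c)/2 with hβ
  have hcc : c * c⁻¹ = 1 := mul_inv_cancel₀ hc
  obtain ⟨g, g', hgval, hg, hg', hg0, hg0'⟩ := sol_deriv c γ δ α β hc
  obtain ⟨hw1, hw2⟩ := bridge hw
  have heq : EqOn w g (Icc (0:ℝ) 1) := by
    apply ode_uniq lam (fun x => γ*Complex.exp (c*x) + δ*Complex.exp (-c*x)) w
      (derivWithin w (Icc (0:ℝ) 1)) g g' hw1
    · intro x hx
      have h := hode x hx
      have : iteratedDerivWithin 2 w (Icc (0:ℝ) 1) x
          = -lam * w x - (γ*Complex.exp (c*x) + δ*Complex.exp (-c*x)) := by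
        rw [← h]; ring
      rw [← this]; exact hw2 x hx
    · intro x hx; exact (hg x).hasDerivWithinAt
    · intro x hx
      have := (hg' x).hasDerivWithinAt (s := Icc (0:ℝ) 1)
      have hval : -(-(c^2)) * g x - (γ*Complex.exp (c*x) + δ*Complex.exp (-c*x))
          = -lam * g x - (γ*Complex.exp (c*x) + δ*Complex.exp (-c*x)) := by
        rw [hc2]; ring
      rwa [hval] at this
    · rw [hg0, hα, hβ]; ring
    · rw [hg0', hα, hβ, hs]; linear_combination (-(B + (γ-δ)/(2*c))) * hcc
  exact ⟨α, β, fun x hx => by rw [heq hx, hgval x]⟩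

lemma rep_zero (d : ℂ) {w : ℝ → ℂ} (hw : ContDiffOn ℝ 2 w (Icc 0 1))
    (hode : ∀ x ∈ Icc (0:ℝ) 1, -(iteratedDerivWithin 2 w (Icc (0:ℝ) 1) x) - 0 * w x = d) :
    ∃ α β : ℂ, ∀ x ∈ Icc (0:ℝ) 1, w x = -(d/2)*(x:ℂ)^2 + α + β*(x:ℂ) := by
  classical
  obtain ⟨hw1, hw2⟩ := bridge hw
  set α := w 0 with hA
  set β := derivWithin w (Icc (0:ℝ) 1) 0 with hB
  set g : ℝ → ℂ := fun x => -(d/2)*(x:ℂ)^2 + α + β*(x:ℂ) with hg_def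
  set g' : ℝ → ℂ := fun x => -(d/2)*(2*(x:ℂ)) + β with hg'_def
  have hg : ∀ x, HasDerivAt g (g' x) x := by
    intro x
    have hx := hasDerivAt_ofReal' x
    have H := ((((hx.mul hx).const_mul (-(d/2))).add_const α).add (hx.const_mul β))
    have hfun : g = fun x:ℝ => (-(d/2)*((x:ℂ)*(x:ℂ)) + α) + β*(x:ℂ) := by
      funext t; simp only [hg_def]; ring
    rw [hfun]
    refine H.congr_deriv ?_
    simp only [hg'_def]
    ring
  have hg' : ∀ x, HasDerivAt g' (-(0:ℂ) * g x - d) x := by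
    intro x
    have hx := hasDerivAt_ofReal' x
    have H := ((hx.const_mul 2).const_mul (-(d/2))).add_const β
    have hfun : g' = fun x:ℝ => -(d/2)*(2*(x:ℂ)) + β := rfl
    rw [hfun]
    refine H.congr_deriv ?_
    ring
  have heq : EqOn w g (Icc (0:ℝ) 1) := by
    apply ode_uniq 0 (fun _ => d) w (derivWithin w (Icc (0:ℝ) 1)) g g' hw1
    · intro x hx
      have h := hode x hx
      have : iteratedDerivWithin 2 w (Icc (0:ℝ) 1) x = -(0:ℂ) * w x - d := by
        rw [← h]; ring
      rw [← this]; exact hw2 x hx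
    · intro x hx; exact (hg x).hasDerivWithinAt
    · intro x hx; exact (hg' x).hasDerivWithinAt
    · simp [hg_def, hA]
    · simp [hg'_def, hB]
  exact ⟨α, β, fun x hx => heq hx⟩

lemma i2_exp (c : ℂ) {x : ℝ} (hx : x ∈ Icc (0:ℝ) 1) :
    iteratedDerivWithin 2 (fun x : ℝ => Complex.exp (c * x)) (Icc (0:ℝ) 1) x
      = c^2 * Complex.exp (c * x) := by
  have h1 : ∀ y ∈ Icc (0:ℝ) 1, derivWithin (fun x : ℝ => Complex.exp (c * x)) (Icc (0:ℝ) 1) y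
      = c * Complex.exp (c * y) := fun y hy =>
    ((hasDerivAt_cexp_mul c y).hasDerivWithinAt).derivWithin (udo01 y hy)
  rw [iteratedDerivWithin_succ]
  have h2 : derivWithin (iteratedDerivWithin 1 (fun x : ℝ => Complex.exp (c * x)) (Icc (0:ℝ) 1))
        (Icc (0:ℝ) 1) x
      = derivWithin (fun y : ℝ => c * Complex.exp (c * y)) (Icc (0:ℝ) 1) x := by
    apply derivWithin_congr
    · intro y hy; rw [iteratedDerivWithin_one]; exact h1 y hy
    · rw [iteratedDerivWithin_one]; exact h1 x hx
  rw [h2, (((hasDerivAt_cexp_mul c x).const_mul c).hasDerivWithinAt).derivWithin (udo01 x hx)]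
  ring

lemma cexp_contDiffOn (c : ℂ) :
    ContDiffOn ℝ 2 (fun x : ℝ => Complex.exp (c * x)) (Icc (0:ℝ) 1) := by
  apply ContDiff.contDiffOn
  apply Complex.contDiff_exp.comp
  exact contDiff_const.mul Complex.ofRealCLM.contDiff

lemma not_irrational_of_exp {c : ℂ} (hc : c ≠ 0) {a : ℝ}
    (hW : Complex.exp (c * a) = 1) (hZ : Complex.exp (c * (1:ℝ)) = 1) : ¬ Irrational a := by
  rw [Complex.exp_eq_one_iff] at hW hZ
  obtain ⟨n, hn⟩ := hW
  obtain ⟨k, hk⟩ := hZ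
  rw [Complex.ofReal_one, mul_one] at hk
  have hkne : (k:ℂ) ≠ 0 := by
    intro h
    apply hc
    rw [hk, h, zero_mul]
  have h2 : (2 * (Real.pi:ℂ) * Complex.I) ≠ 0 := by
    simp [Real.pi_ne_zero, Complex.I_ne_zero]
  have ha : (a:ℂ) = (n:ℂ) / (k:ℂ) := by
    have h3 : ((a:ℂ) * k) * (2 * (Real.pi:ℂ) * Complex.I)
        = (n:ℂ) * (2 * (Real.pi:ℂ) * Complex.I) := by
      linear_combination hn - (a:ℂ) * hk
    have h4 : (a:ℂ) * k = n := mul_right_cancel₀ h2 h3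
    field_simp
    linear_combination h4
  have haR : a = (n:ℝ) / (k:ℝ) := by
    have := ha
    rw [show ((n:ℝ)/(k:ℝ) : ℝ) = (((n:ℂ)/(k:ℂ)) : ℂ).re by push_cast; simp]
    rw [← ha]; simp
  intro hirr
  exact hirr ⟨(n:ℚ)/(k:ℚ), by push_cast; rw [haR]⟩

lemma bvp_factor {p q E : ℂ} (hE : E ≠ 0) (h : p + q = p*E + q*E⁻¹) : E = 1 ∨ q = p*E := by
  have hEE : E * E⁻¹ = 1 := mul_inv_cancel₀ hE
  have h2 : (E - 1)*(p*E - q) = 0 := by linear_combination (-E)*h - q*hEE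
  rcases mul_eq_zero.mp h2 with h|h
  · exact Or.inl (by linear_combination h)
  · exact Or.inr (by linear_combination -h)

lemma endgame (a : ℝ) (lam : ℂ) (y : ℝ → ℂ)
    (hy2 : ContDiffOn ℝ 2 y (Icc 0 1))
    (hb1 : y 0 = y a) (hb2 : y a = y 1)
    (hyode : ∀ x ∈ Icc (0:ℝ) 1, -(iteratedDerivWithin 2 y (Icc (0:ℝ) 1) x) = lam * y x)
    (hyne : ∃ x₀ ∈ Icc (0:ℝ) 1, y x₀ ≠ 0)
    (H1 : ∀ u : ℝ → ℂ, ContDiffOn ℝ 2 u (Icc 0 1) → u 0 = u a → u a = u 1 →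
      (∀ x ∈ Icc (0:ℝ) 1, -(iteratedDerivWithin 2 u (Icc (0:ℝ) 1) x) = lam * u x) →
      ∃ d : ℂ, ∀ x ∈ Icc (0:ℝ) 1, u x = d * y x)
    (H2 : ∀ (v : ℝ → ℂ) (d : ℂ), d ≠ 0 → ContDiffOn ℝ 2 v (Icc 0 1) → v 0 = v a → v a = v 1 →
      (∀ x ∈ Icc (0:ℝ) 1, -(iteratedDerivWithin 2 v (Icc (0:ℝ) 1) x) - lam * v x = d * y x) →
      False) :
    ∃ V : Submodule ℂ ((Icc (0:ℝ) 1) → ℂ),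
      (V : Set ((Icc (0:ℝ) 1) → ℂ)) = genEigA a lam ∧
      FiniteDimensional ℂ V ∧ Module.finrank ℂ V = 1 := by
  classical
  obtain ⟨x₀, hx₀, hyx₀⟩ := hyne
  set yR := (Icc (0:ℝ) 1).restrict y with hyR
  have hyRne : yR ≠ 0 := by
    intro h
    apply hyx₀
    have := congrFun h ⟨x₀, hx₀⟩
    simpa [hyR, Set.restrict] using this
  refine ⟨Submodule.span ℂ {yR}, ?_, ?_, finrank_span_singleton hyRne⟩
  · ext z
    simp only [SetLike.mem_coe, Submodule.mem_span_singleton]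
    constructor
    · rintro ⟨d, rfl⟩
      by_cases hd : d = 0
      · left; simp [hd]
      · right
        refine ⟨1, fun _ x => d * y x, ⟨one_pos, ?_, ?_, ?_⟩, ?_⟩
        · intro k _
          exact ⟨contDiffOn_const.mul hy2, by simp only []; rw [hb1],
            by simp only []; rw [hb2]⟩
        · intro x hx
          have hs : iteratedDerivWithin 2 (fun x => d * y x) (Icc (0:ℝ) 1) x
              = d * iteratedDerivWithin 2 y (Icc (0:ℝ) 1) x := by
            have h := iteratedDerivWithin_const_smul (𝕜 := ℝ) (F := ℂ) (R := ℂ) (n := 2)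
              hx udo01 d (hy2 x hx)
            simpa [smul_eq_mul] using h
          rw [hs]
          linear_combination d * hyode x hx
        · intro k hk hk'; omega
        · funext p
          simp [hyR, Set.restrict]
    · rintro (rfl | ⟨n, u, ⟨hn, hreg, hode0, hchain⟩, rfl⟩)
      · exact ⟨0, by simp⟩
      · have key : ∀ k, k < n → ∃ d : ℂ, ∀ x ∈ Icc (0:ℝ) 1, u k x = d * y x := by
          intro k
          induction k with
          | zero =>
            intro hk
            obtain ⟨hreg0, hb01, hb02⟩ := hreg 0 hk
            exact H1 (u 0) hreg0 hb01 hb02 hode0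
          | succ k ih =>
            intro hk
            obtain ⟨d, hd⟩ := ih (by omega)
            obtain ⟨hregk, hbk1, hbk2⟩ := hreg (k+1) hk
            by_cases hdz : d = 0
            · apply H1 (u (k+1)) hregk hbk1 hbk2
              intro x hx
              have hc := hchain (k+1) (by omega) hk x hx
              simp only [Nat.add_sub_cancel] at hc
              have h0 : u k x = 0 := by rw [hd x hx, hdz, zero_mul]
              rw [h0] at hc
              linear_combination hc
            · exfalso
              apply H2 (u (k+1)) d hdz hregk hbk1 hbk2
              intro x hx
              have hc := hchain (k+1) (by omega) hk x hx
              simp only [Nat.add_sub_cancel] at hc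
              rw [hc]
              exact hd x hx
        obtain ⟨d, hd⟩ := key (n-1) (by omega)
        refine ⟨d, ?_⟩
        funext p
        simp only [hyR, Pi.smul_apply, restrict_apply, smul_eq_mul]
        exact (hd p.1 p.2).symm
  · infer_instance


lemma backward (a : ℝ) (ha : a ∈ Ioo (0:ℝ) 1) (hirr : Irrational a) (lam : ℂ)
    (hlam : IsEigA a lam) :
    ∃ V : Submodule ℂ ((Icc (0:ℝ) 1) → ℂ),
      (V : Set ((Icc (0:ℝ) 1) → ℂ)) = genEigA a lam ∧
      FiniteDimensional ℂ V ∧ Module.finrank ℂ V = 1 := by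
  obtain ⟨y, hy2, hyode, hyne, hb1, hb2⟩ := hlam
  obtain ⟨x₀, hx₀, hyx₀⟩ := hyne
  have ha0I : (0:ℝ) ∈ Icc (0:ℝ) 1 := ⟨le_refl 0, zero_le_one⟩
  have haI : a ∈ Icc (0:ℝ) 1 := ⟨ha.1.le, ha.2.le⟩
  have h1I : (1:ℝ) ∈ Icc (0:ℝ) 1 := ⟨zero_le_one, le_refl 1⟩
  have haC0 : (a:ℂ) ≠ 0 := by
    simp only [ne_eq, Complex.ofReal_eq_zero]; exact ne_of_gt ha.1
  have haC1 : (a:ℂ) ≠ 1 := by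
    intro h
    have : a = 1 := by exact_mod_cast h
    exact absurd this (ne_of_lt ha.2)
  by_cases hlam0 : lam = 0
  · subst hlam0
    obtain ⟨A, B, hrep⟩ := rep_zero 0 hy2
      (fun x hx => by linear_combination hyode x hx)
    have hyrep : ∀ x ∈ Icc (0:ℝ) 1, y x = A + B * (x:ℂ) := by
      intro x hx; rw [hrep x hx]; ring
    have hB : B = 0 := by
      have e0 := hyrep 0 ha0I
      have ea := hyrep a haI
      rw [e0, ea] at hb1
      push_cast at hb1
      have h : B * (a:ℂ) = 0 := by linear_combination -hb1
      rcases mul_eq_zero.mp h with h'|h'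
      · exact h'
      · exact absurd h' haC0
    have hyconst : ∀ x ∈ Icc (0:ℝ) 1, y x = A := by
      intro x hx; rw [hyrep x hx, hB]; ring
    have hA : A ≠ 0 := by rw [← hyconst x₀ hx₀]; exact hyx₀
    apply endgame a 0 y hy2 hb1 hb2 hyode ⟨x₀, hx₀, hyx₀⟩
    · -- H1
      intro u hu hub1 hub2 huode
      obtain ⟨A₀, B₀, hrep₀⟩ := rep_zero 0 hu
        (fun x hx => by linear_combination huode x hx)
      have hurep : ∀ x ∈ Icc (0:ℝ) 1, u x = A₀ + B₀ * (x:ℂ) := by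
        intro x hx; rw [hrep₀ x hx]; ring
      have hB₀ : B₀ = 0 := by
        have e0 := hurep 0 ha0I
        have ea := hurep a haI
        rw [e0, ea] at hub1
        push_cast at hub1
        have h : B₀ * (a:ℂ) = 0 := by linear_combination -hub1
        rcases mul_eq_zero.mp h with h'|h'
        · exact h'
        · exact absurd h' haC0
      refine ⟨A₀ / A, fun x hx => ?_⟩
      rw [hurep x hx, hyconst x hx, hB₀]
      field_simp
      ring
    · -- H2
      intro v d hd hv hvb1 hvb2 hvode
      obtain ⟨α, β, hvrep⟩ := rep_zero (d * A) hv
        (fun x hx => by rw [hvode x hx, hyconst x hx])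
      have e0 := hvrep 0 ha0I
      have ea := hvrep a haI
      have e1 := hvrep 1 h1I
      have h01 : v 0 = v 1 := hvb1.trans hvb2
      rw [e0, ea] at hvb1
      rw [e0, e1] at h01
      push_cast at hvb1 h01
      have hβ : β = d*A/2 := by linear_combination -h01
      rw [hβ] at hvb1
      have hkey : d * A * ((a:ℂ) * (1 - (a:ℂ))) = 0 := by linear_combination -2 * hvb1
      rcases mul_eq_zero.mp hkey with h'|h'
      · exact (mul_ne_zero hd hA) h'
      · rcases mul_eq_zero.mp h' with h''|h''
        · exact haC0 h''
        · exact haC1 (by linear_combination -h'')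
  · obtain ⟨c, hc2⟩ := IsAlgClosed.exists_pow_nat_eq (-lam) (n := 2) (by norm_num)
    have hc : c ≠ 0 := by
      intro h
      apply hlam0
      have h2 : -lam = 0 := by rw [← hc2, h]; ring
      simpa using h2
    have rep_hom : ∀ w : ℝ → ℂ, ContDiffOn ℝ 2 w (Icc 0 1) →
        (∀ x ∈ Icc (0:ℝ) 1, -(iteratedDerivWithin 2 w (Icc (0:ℝ) 1) x) = lam * w x) →
        ∃ γ δ : ℂ, ∀ x ∈ Icc (0:ℝ) 1,
          w x = γ*Complex.exp (c*x) + δ*Complex.exp (-c*x) := by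
      intro w hw hode
      obtain ⟨γ, δ, h⟩ := rep_ne lam c hc2 hc 0 0 hw
        (fun x hx => by rw [zero_mul, zero_mul, add_zero]; linear_combination hode x hx)
      exact ⟨γ, δ, fun x hx => by rw [h x hx]; ring⟩
    set W : ℂ := Complex.exp (c * ((a:ℝ):ℂ)) with hWdef
    set Z : ℂ := Complex.exp (c * (((1:ℝ)):ℂ)) with hZdef
    have hW0 : W ≠ 0 := Complex.exp_ne_zero _
    have hZ0 : Z ≠ 0 := Complex.exp_ne_zero _
    have hWW : W * W⁻¹ = 1 := mul_inv_cancel₀ hW0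
    have hZZ : Z * Z⁻¹ = 1 := mul_inv_cancel₀ hZ0
    have hexpa : Complex.exp (-c * ((a:ℝ):ℂ)) = W⁻¹ := by
      rw [hWdef, ← Complex.exp_neg]; ring_nf
    have hexp1 : Complex.exp (-c * (((1:ℝ)):ℂ)) = Z⁻¹ := by
      rw [hZdef, ← Complex.exp_neg]; ring_nf
    have evgen : ∀ (γ δ : ℂ) (w : ℝ → ℂ),
        (∀ x ∈ Icc (0:ℝ) 1, w x = γ*Complex.exp (c*x) + δ*Complex.exp (-c*x)) →
        w 0 = γ + δ ∧ w a = γ*W + δ*W⁻¹ ∧ w 1 = γ*Z + δ*Z⁻¹ := by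
      intro γ δ w h
      refine ⟨?_, ?_, ?_⟩
      · rw [h 0 ha0I]; simp
      · rw [h a haI, hexpa]
      · rw [h 1 h1I, hexp1]
    have hnb : ¬(W = 1 ∧ Z = 1) := by
      rintro ⟨h1, h2⟩
      exact not_irrational_of_exp hc h1 h2 hirr
    obtain ⟨γ, δ, hy⟩ := rep_hom y hy2 hyode
    obtain ⟨ey0, eya, ey1⟩ := evgen γ δ y hy
    have hWcase : W = 1 ∨ δ = γ * W := bvp_factor hW0 (by rw [← ey0, ← eya]; exact hb1)
    have hZcase : Z = 1 ∨ δ = γ * Z := bvp_factor hZ0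
      (by rw [← ey0, ← ey1]; exact hb1.trans hb2)
    have hynz : ¬(γ = 0 ∧ δ = 0) := by
      rintro ⟨h1, h2⟩
      exact hyx₀ (by rw [hy x₀ hx₀, h1, h2]; ring)
    have tri : ∃ τ : ℂ, δ = γ * τ ∧ γ ≠ 0 ∧
        ((W = 1 ∧ Z ≠ 1 ∧ τ = Z) ∨ (Z = 1 ∧ W ≠ 1 ∧ τ = W) ∨
         (W ≠ 1 ∧ Z ≠ 1 ∧ W = Z ∧ τ = W)) := by
      by_cases hW1 : W = 1
      · by_cases hZ1 : Z = 1
        · exact absurd ⟨hW1, hZ1⟩ hnb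
        · have hδ : δ = γ * Z := hZcase.resolve_left hZ1
          have hγ : γ ≠ 0 := fun h => hynz ⟨h, by rw [hδ, h, zero_mul]⟩
          exact ⟨Z, hδ, hγ, Or.inl ⟨hW1, hZ1, rfl⟩⟩
      · have hδ : δ = γ * W := hWcase.resolve_left hW1
        have hγ : γ ≠ 0 := fun h => hynz ⟨h, by rw [hδ, h, zero_mul]⟩
        by_cases hZ1 : Z = 1
        · exact ⟨W, hδ, hγ, Or.inr (Or.inl ⟨hZ1, hW1, rfl⟩)⟩
        · have hδ' : δ = γ * Z := hZcase.resolve_left hZ1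
          have hWZ : W = Z := mul_left_cancel₀ hγ (by rw [← hδ, hδ'])
          exact ⟨W, hδ, hγ, Or.inr (Or.inr ⟨hW1, hZ1, hWZ, rfl⟩)⟩
    obtain ⟨τ, hδτ, hγ, hcases⟩ := tri
    apply endgame a lam y hy2 hb1 hb2 hyode ⟨x₀, hx₀, hyx₀⟩
    · -- H1
      intro u hu hub1 hub2 huode
      obtain ⟨γ₀, δ₀, hu'⟩ := rep_hom u hu huode
      obtain ⟨eu0, eua, eu1⟩ := evgen γ₀ δ₀ u hu'
      have hδ₀ : δ₀ = γ₀ * τ := by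
        rcases hcases with ⟨hW1, hZ1, hτ⟩ | ⟨hZ1, hW1, hτ⟩ | ⟨hW1, hZ1, hWZ, hτ⟩
        · have := (bvp_factor hZ0
            (by rw [← eu0, ← eu1]; exact hub1.trans hub2)).resolve_left hZ1
          rw [hτ]; exact this
        · have := (bvp_factor hW0
            (by rw [← eu0, ← eua]; exact hub1)).resolve_left hW1
          rw [hτ]; exact this
        · have := (bvp_factor hW0
            (by rw [← eu0, ← eua]; exact hub1)).resolve_left hW1
          rw [hτ]; exact this
      refine ⟨γ₀ / γ, fun x hx => ?_⟩
      rw [hu' x hx, hy x hx, hδτ, hδ₀]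
      field_simp
    · -- H2
      intro v d hd hv hvb1 hvb2 hvode
      obtain ⟨α, β, hvrep⟩ := rep_ne lam c hc2 hc (d*γ) (d*γ*τ) hv
        (fun x hx => by rw [hvode x hx, hy x hx, hδτ]; ring)
      have ev0 : v 0 = α + β := by rw [hvrep 0 ha0I]; simp
      have eva : v a = -((a:ℂ)/(2*c))*((d*γ)*W - (d*γ*τ)*W⁻¹) + α*W + β*W⁻¹ := by
        rw [hvrep a haI, hexpa]
      have ev1 : v 1 = -((1:ℂ)/(2*c))*((d*γ)*Z - (d*γ*τ)*Z⁻¹) + α*Z + β*Z⁻¹ := by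
        rw [hvrep 1 h1I, hexp1, ← hZdef]; push_cast; ring
      have hcc : c * c⁻¹ = 1 := mul_inv_cancel₀ hc
      have hdγ : d * γ ≠ 0 := mul_ne_zero hd hγ
      rcases hcases with ⟨hW1, hZ1, hτ⟩ | ⟨hZ1, hW1, hτ⟩ | ⟨hW1, hZ1, hWZ, hτ⟩
      · rw [ev0, eva, hW1, hτ] at hvb1
        simp only [inv_one, mul_one] at hvb1
        have key : (a:ℂ) * (d*γ) * (1 - Z) = 0 := by
          linear_combination (2*c) * hvb1 - ((a:ℂ) * (d*γ) * (1-Z)) * hcc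
        rcases mul_eq_zero.mp key with h'|h'
        · rcases mul_eq_zero.mp h' with h''|h''
          · exact haC0 h''
          · exact hdγ h''
        · exact hZ1 (by linear_combination -h')
      · have hv01 : v 0 = v 1 := hvb1.trans hvb2
        rw [ev0, ev1, hZ1, hτ] at hv01
        simp only [inv_one, mul_one] at hv01
        have key : (d*γ) * (1 - W) = 0 := by
          linear_combination (2*c) * hv01 - ((d*γ) * (1-W)) * hcc
        rcases mul_eq_zero.mp key with h'|h'
        · exact hdγ h'
        · exact hW1 (by linear_combination -h')
      · rw [eva, ev1, ← hWZ, hτ] at hvb2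
        have key : (d*γ) * (W - 1) * (1 - (a:ℂ)) = 0 := by
          linear_combination (2*c) * hvb2 - ((1-(a:ℂ)) * (d*γ) * (W-1)) * hcc
            + ((1 - (a:ℂ)) * (d*γ) * (c*c⁻¹)) * hWW
        rcases mul_eq_zero.mp key with h'|h'
        · rcases mul_eq_zero.mp h' with h''|h''
          · exact hdγ h''
          · exact hW1 (by linear_combination h'')
        · exact haC1 (by linear_combination -h')

end Stmt13Aux

theorem stmt13 (a : ℝ) (ha : a ∈ Ioo (0:ℝ) 1) :
    (∀ lam : ℂ, IsEigA a lam →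
      ∃ V : Submodule ℂ ((Icc (0:ℝ) 1) → ℂ),
        (V : Set ((Icc (0:ℝ) 1) → ℂ)) = genEigA a lam ∧
        FiniteDimensional ℂ V ∧ Module.finrank ℂ V = 1) ↔
    Irrational a := by
  constructor
  · intro h
    by_contra hirr
    rw [Irrational] at hirr
    push_neg at hirr
    obtain ⟨q, hq⟩ := hirr
    have ha0I : (0:ℝ) ∈ Icc (0:ℝ) 1 := ⟨le_refl 0, zero_le_one⟩
    set k : ℕ := q.den with hkdef
    set m : ℤ := q.num with hmdef
    have hkpos : 0 < k := q.pos
    have hkC : (k:ℂ) ≠ 0 := by exact_mod_cast Nat.pos_iff_ne_zero.mp hkpos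
    set c : ℂ := 2*(Real.pi:ℂ)*Complex.I*(k:ℂ) with hcdef
    set lam : ℂ := -(c^2) with hlamdef
    have haC : (a:ℂ) = (m:ℂ)/(k:ℂ) := by
      rw [← hq]
      push_cast [Rat.cast_def]
      norm_num
      rfl
    have hca : c * (a:ℂ) = (m:ℂ) * (2*(Real.pi:ℂ)*Complex.I) := by
      rw [haC, hcdef]; field_simp
    have hc1 : c * ((1:ℝ):ℂ) = (k:ℂ) * (2*(Real.pi:ℂ)*Complex.I) := by
      rw [hcdef]; push_cast; ring
    have hEa : Complex.exp (c * (a:ℝ)) = 1 := by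
      rw [hca]
      exact_mod_cast Complex.exp_int_mul_two_pi_mul_I m
    have hE1 : Complex.exp (c * ((1:ℝ):ℂ)) = 1 := by
      rw [hc1]
      exact_mod_cast Complex.exp_int_mul_two_pi_mul_I (k:ℤ)
    have hFa : Complex.exp (-c * (a:ℝ)) = 1 := by
      rw [show -c * ((a:ℝ):ℂ) = -(c * a) by ring, Complex.exp_neg, hEa]; norm_num
    have hF1 : Complex.exp (-c * ((1:ℝ):ℂ)) = 1 := by
      rw [show -c * ((1:ℝ):ℂ) = -(c * ((1:ℝ):ℂ)) by ring, Complex.exp_neg, hE1]; norm_num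
    have hE0 : Complex.exp (c * ((0:ℝ):ℂ)) = 1 := by norm_num
    have hF0 : Complex.exp (-c * ((0:ℝ):ℂ)) = 1 := by norm_num
    have memgen : ∀ c' : ℂ, c'^2 = c^2 →
        (Complex.exp (c' * ((0:ℝ):ℂ)) = 1) → (Complex.exp (c' * ((a:ℝ):ℂ)) = 1) →
        (Complex.exp (c' * ((1:ℝ):ℂ)) = 1) →
        (Icc (0:ℝ) 1).restrict (fun x : ℝ => Complex.exp (c' * x)) ∈ genEigA a lam := by
      intro c' hc' h0 haa h1
      right
      refine ⟨1, fun _ => (fun x : ℝ => Complex.exp (c' * x)), ⟨one_pos, ?_, ?_, ?_⟩, rfl⟩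
      · intro j _
        exact ⟨Stmt13Aux.cexp_contDiffOn c', by simp only []; rw [h0, haa],
          by simp only []; rw [haa, h1]⟩
      · intro x hx
        rw [Stmt13Aux.i2_exp c' hx, hc', hlamdef]
        ring
      · intro j hj hj'; omega
    have memE := memgen c rfl hE0 hEa hE1
    have memF := memgen (-c) (by ring) hF0 hFa hF1
    have heig : IsEigA a lam := by
      refine ⟨fun x : ℝ => Complex.exp (c * x), Stmt13Aux.cexp_contDiffOn c, ?_, ?_, ?_, ?_⟩
      · intro x hx
        rw [Stmt13Aux.i2_exp c hx, hlamdef]; ring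
      · exact ⟨0, ha0I, Complex.exp_ne_zero _⟩
      · simp only [hE0, hEa]
      · simp only [hEa, hE1]
    obtain ⟨V, hcar, hfd, hrk⟩ := h lam heig
    have hEV : (Icc (0:ℝ) 1).restrict (fun x : ℝ => Complex.exp (c * x)) ∈ V := by
      rw [← SetLike.mem_coe, hcar]; exact memE
    have hFV : (Icc (0:ℝ) 1).restrict (fun x : ℝ => Complex.exp (-c * x)) ∈ V := by
      rw [← SetLike.mem_coe, hcar]; exact memF
    set vE : V := ⟨_, hEV⟩ with hvEdef
    set vF : V := ⟨_, hFV⟩ with hvFdef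
    have hvE0 : vE ≠ 0 := by
      intro hcontr
      have := congrFun (congrArg Subtype.val hcontr) ⟨0, ha0I⟩
      simp only [hvEdef, restrict_apply, Set.restrict, ZeroMemClass.coe_zero, Pi.zero_apply] at this
      rw [show ((0:ℝ):ℂ) = 0 by norm_num, mul_zero, Complex.exp_zero] at this
      exact one_ne_zero this
    obtain ⟨r, hr⟩ := (finrank_eq_one_iff_of_nonzero' vE hvE0).mp hrk vF
    have hr0 : r * Complex.exp (c * ((0:ℝ):ℂ)) = Complex.exp (-c * ((0:ℝ):ℂ)) := by
      have := congrFun (congrArg Subtype.val hr) ⟨0, ha0I⟩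
      simpa [hvEdef, hvFdef, Set.restrict] using this
    rw [hE0, hF0, mul_one] at hr0
    set x₁ : ℝ := 1/(4*k) with hx₁def
    have hx₁I : x₁ ∈ Icc (0:ℝ) 1 := by
      constructor
      · positivity
      · rw [hx₁def, div_le_one (by positivity)]
        have : (1:ℝ) ≤ k := by exact_mod_cast hkpos
        nlinarith
    have hcx₁ : c * (x₁:ℂ) = ((Real.pi/2 : ℝ):ℂ) * Complex.I := by
      rw [hcdef, hx₁def]
      push_cast
      field_simp
      ring
    have hEx₁ : Complex.exp (c * (x₁:ℂ)) = Complex.I := by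
      rw [hcx₁, Complex.exp_mul_I, ← Complex.ofReal_cos, ← Complex.ofReal_sin]
      norm_num
    have hFx₁ : Complex.exp (-c * (x₁:ℂ)) = -Complex.I := by
      rw [show -c * (x₁:ℂ) = -(c * x₁) by ring, Complex.exp_neg, hcx₁]
      rw [Complex.exp_mul_I, ← Complex.ofReal_cos, ← Complex.ofReal_sin]
      norm_num
    have hr1 : r * Complex.exp (c * (x₁:ℂ)) = Complex.exp (-c * (x₁:ℂ)) := by
      have := congrFun (congrArg Subtype.val hr) ⟨x₁, hx₁I⟩
      simpa [hvEdef, hvFdef, Set.restrict] using this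
    rw [hEx₁, hFx₁, hr0, one_mul] at hr1
    exact Complex.I_ne_zero (by linear_combination hr1/2)
  · intro hirr lam hlam
    exact Stmt13Aux.backward a ha hirr lam hlam
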